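/- For every real u > 0, all integers g ≥ 0, n ≥ 1 with 2g−2+n > 0 and all integers k_1,…,k_n ≥ 0, the Painlevé I amplitudes satisfy the homogeneity relation F^PI_{g;k_1,…,k_n}(u) = u^{−(5g−5+2n−(k_1+⋯+k_n))} · F^PI_{g;k_1,…,k_n}(1); moreover F^PI_{g;k_1,…,k_n}(u) ≥ 0. -/

import Mathlib

open scoped BigOperators

noncomputable section

/-- The data of a quantum Airy structure: tensors `A`, `B`, `C`, `D`.
`B α β γ` stands for `B_{α,β}^{γ}` and `C α β γ` for `C_{α}^{β,γ}`. -/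
structure AiryTensors (𝕜 : Type*) [RCLike 𝕜] (ι : Type*) where
  A : ι → ι → ι → 𝕜
  B : ι → ι → ι → 𝕜
  C : ι → ι → ι → 𝕜
  D : ι → 𝕜

/-- The sublist of `l` formed by the entries whose index lies in `s`. -/
def selectIdx {ι : Type*} (l : List ι) (s : Finset (Fin l.length)) : List ι :=
  ((List.finRange l.length).filter (fun i => decide (i ∈ s))).map l.get

/-- `F` is the family of amplitudes associated with the tensors `T`:
symmetric in its indices, vanishing when `k₁ + ⋯ + kₙ > 3g - 3 + n` (where `k = deg`),
with initial data `F_{0;α,β,γ} = A_{α,β,γ}`, `F_{1;α} = D_α`, the conventions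
`F_{0;α} = F_{0;α,β} = 0`, and satisfying the topological recursion on `2g - 2 + n`. -/
structure IsAmplitudes {𝕜 : Type*} [RCLike 𝕜] {ι : Type*} (deg : ι → ℕ)
    (T : AiryTensors 𝕜 ι) (F : ℕ → List ι → 𝕜) : Prop where
  symm : ∀ g (l l' : List ι), l.Perm l' → F g l = F g l'
  vanish : ∀ g (l : List ι), 1 ≤ l.length → 2 < 2 * g + l.length →
    3 * g + l.length < (l.map deg).sum + 3 → F g l = 0
  zero_one : ∀ α, F 0 [α] = 0
  zero_two : ∀ α β, F 0 [α, β] = 0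
  base_A : ∀ α β γ, F 0 [α, β, γ] = T.A α β γ
  base_D : ∀ α, F 1 [α] = T.D α
  recur : ∀ g (α : ι) (l : List ι), 4 ≤ 2 * g + (l.length + 1) →
    F g (α :: l) =
      (∑ m : Fin l.length, ∑' μ : ι, T.B α (l.get m) μ * F g (μ :: l.eraseIdx m.1))
      + (1/2) * ∑' μ : ι, ∑' ν : ι, T.C α μ ν *
          ((if g = 0 then 0 else F (g-1) (μ :: ν :: l))
           + ∑ g₁ ∈ Finset.range (g+1), ∑ s : Finset (Fin l.length),
               F g₁ (μ :: selectIdx l s) * F (g - g₁) (ν :: selectIdx l sᶜ))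

/-- The Painlevé I quantum Airy structure with parameter `u`. -/
def PITensors (u : ℝ) : AiryTensors ℝ ℕ where
  A i j k := if i = 0 ∧ j = 0 ∧ k = 0 then 1 / (6 * u) else 0
  B i j k := if i + j ≤ k + 1 then
      (Nat.doubleFactorial (2*k+1) : ℝ) / (2 * (3*u) ^ (k + 2 - (i + j)) * (Nat.doubleFactorial (2*i+1) : ℝ) * (Nat.doubleFactorial (2*j-1) : ℝ))
    else 0
  C i j k := if i ≤ j + k + 2 then
      ((Nat.doubleFactorial (2*j+1) : ℝ) * (Nat.doubleFactorial (2*k+1) : ℝ)) / (2 * (3*u) ^ (j + k + 3 - i) * (Nat.doubleFactorial (2*i+1) : ℝ))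
    else 0
  D i := (if i = 0 then 1 / (16 * (3*u)^2) else 0) + (if i = 1 then 1 / (48 * (3*u)) else 0)

/-- The Airy quantum Airy structure. -/
def AiryT : AiryTensors ℝ ℕ where
  A i j k := if i = 0 ∧ j = 0 ∧ k = 0 then 1 else 0
  B i j k := if i + j = k + 1 then (Nat.doubleFactorial (2*k+1) : ℝ) / ((Nat.doubleFactorial (2*i+1) : ℝ) * (Nat.doubleFactorial (2*j-1) : ℝ)) else 0
  C i j k := if i = j + k + 2 then ((Nat.doubleFactorial (2*j+1) : ℝ) * (Nat.doubleFactorial (2*k+1) : ℝ)) / (Nat.doubleFactorial (2*i+1) : ℝ) else 0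
  D i := if i = 1 then 1 / 24 else 0

/-- The quantum Airy structure of a (local) spectral curve with ramification points `𝔞`,
built from the expansion coefficients `θ` (with `θ a m = 0` for `m < 0`) and `φ`. -/
def genTensors {𝕜 : Type*} [RCLike 𝕜] {𝔞 : Type*} [DecidableEq 𝔞]
    (θ : 𝔞 → ℤ → 𝕜) (φ : 𝔞 × ℕ → 𝔞 × ℕ → 𝕜) : AiryTensors 𝕜 (𝔞 × ℕ) where
  A α β γ := if α.1 = β.1 ∧ β.1 = γ.1 ∧ α.2 = 0 ∧ β.2 = 0 ∧ γ.2 = 0 then θ α.1 0 else 0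
  B α β γ :=
    (if α.1 = β.1 ∧ β.1 = γ.1 then
        θ α.1 ((γ.2 : ℤ) - α.2 - β.2 + 1) * (Nat.doubleFactorial (2*γ.2+1) : 𝕜)
          / ((Nat.doubleFactorial (2*α.2+1) : 𝕜) * (Nat.doubleFactorial (2*β.2-1) : 𝕜))
      else 0)
    + (if α.1 = β.1 ∧ α.2 = 0 ∧ β.2 = 0 then
        θ α.1 0 * φ (α.1, 0) γ * (Nat.doubleFactorial (2*γ.2-1) : 𝕜) else 0)
  C α β γ :=
    (if α.1 = β.1 ∧ β.1 = γ.1 then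
        θ α.1 ((β.2 : ℤ) + γ.2 - α.2 + 2) * ((Nat.doubleFactorial (2*β.2+1) : 𝕜) * (Nat.doubleFactorial (2*γ.2+1) : 𝕜))
          / (Nat.doubleFactorial (2*α.2+1) : 𝕜)
      else 0)
    + (if α.1 = β.1 then
        (∑ m ∈ Finset.range (β.2 + 2 - α.2), θ α.1 (m : ℤ) * φ (α.1, β.2 + 1 - α.2 - m) γ)
          * ((Nat.doubleFactorial (2*β.2+1) : 𝕜) * (Nat.doubleFactorial (2*γ.2-1) : 𝕜)) / (Nat.doubleFactorial (2*α.2+1) : 𝕜)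
      else 0)
    + (if α.1 = γ.1 then
        (∑ m ∈ Finset.range (γ.2 + 2 - α.2), θ α.1 (m : ℤ) * φ (α.1, γ.2 + 1 - α.2 - m) β)
          * ((Nat.doubleFactorial (2*β.2-1) : 𝕜) * (Nat.doubleFactorial (2*γ.2+1) : 𝕜)) / (Nat.doubleFactorial (2*α.2+1) : 𝕜)
      else 0)
    + (if α.2 = 0 then
        θ α.1 0 * φ (α.1, 0) β * φ (α.1, 0) γ * ((Nat.doubleFactorial (2*β.2-1) : 𝕜) * (Nat.doubleFactorial (2*γ.2-1) : 𝕜))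
      else 0)
  D α :=
    (if α.2 = 0 then θ α.1 0 * φ (α.1, 0) (α.1, 0) / 2 + θ α.1 1 / 8 else 0)
    + (if α.2 = 1 then θ α.1 0 / 24 else 0)

/-- The function `P` from the upper bound on Painlevé I amplitudes. -/
def Pfun (u : ℝ) : ℝ := if u < 2/5 then 2 / (5 * u^2) else 5 / (10 * u - 2)


private lemma dfac_pos (n : ℕ) : (0:ℝ) < (Nat.doubleFactorial n : ℝ) := by
  exact_mod_cast Nat.doubleFactorial_pos n

private lemma Bscale {u : ℝ} (hu : 0 < u) (i j k : ℕ) :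
    (PITensors u).B i j k = u ^ ((i:ℤ)+j-k-2) * (PITensors 1).B i j k := by
  have hu0 : u ≠ 0 := hu.ne'
  simp only [PITensors]
  split_ifs with h
  · have hm : ((i:ℤ)+j-k-2) = -((k+2-(i+j) : ℕ) : ℤ) := by omega
    rw [hm, zpow_neg, zpow_natCast, mul_pow, mul_pow]
    have h1 := dfac_pos (2*i+1)
    have h2 := dfac_pos (2*j-1)
    have h3 := dfac_pos (2*k+1)
    have h4 : (0:ℝ) < u ^ (k+2-(i+j)) := pow_pos hu _
    field_simp
    ring_nf
  · simp

private lemma Cscale {u : ℝ} (hu : 0 < u) (i j k : ℕ) :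
    (PITensors u).C i j k = u ^ ((i:ℤ)-j-k-3) * (PITensors 1).C i j k := by
  have hu0 : u ≠ 0 := hu.ne'
  simp only [PITensors]
  split_ifs with h
  · have hm : ((i:ℤ)-j-k-3) = -((j+k+3-i : ℕ) : ℤ) := by omega
    rw [hm, zpow_neg, zpow_natCast, mul_pow, mul_pow]
    have h1 := dfac_pos (2*i+1)
    have h2 := dfac_pos (2*j+1)
    have h3 := dfac_pos (2*k+1)
    have h4 : (0:ℝ) < u ^ (j+k+3-i) := pow_pos hu _
    field_simp
    ring
  · simp

private lemma Ascale {u : ℝ} (hu : 0 < u) (i j k : ℕ) :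
    (PITensors u).A i j k = u ^ ((i:ℤ)+j+k-1) * (PITensors 1).A i j k := by
  have hu0 : u ≠ 0 := hu.ne'
  simp only [PITensors]
  split_ifs with h
  · obtain ⟨rfl, rfl, rfl⟩ := h
    norm_num [zpow_neg]
  · simp

private lemma Dscale {u : ℝ} (hu : 0 < u) (i : ℕ) :
    (PITensors u).D i = u ^ ((i:ℤ)-2) * (PITensors 1).D i := by
  have hu0 : u ≠ 0 := hu.ne'
  simp only [PITensors]
  rcases Nat.lt_or_ge i 2 with hi | hi
  · interval_cases i
    · norm_num
      field_simp
      ring_nf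
    · norm_num
      ring
  · have h0 : i ≠ 0 := by omega
    have h1 : i ≠ 1 := by omega
    simp [h0, h1]

private lemma Bnn {u : ℝ} (hu : 0 < u) (i j k : ℕ) : 0 ≤ (PITensors u).B i j k := by
  simp only [PITensors]
  split_ifs
  · have h1 := dfac_pos (2*i+1); have h2 := dfac_pos (2*j-1); have h3 := dfac_pos (2*k+1)
    positivity
  · exact le_refl 0

private lemma Cnn {u : ℝ} (hu : 0 < u) (i j k : ℕ) : 0 ≤ (PITensors u).C i j k := by
  simp only [PITensors]
  split_ifs
  · have h1 := dfac_pos (2*i+1); have h2 := dfac_pos (2*j+1); have h3 := dfac_pos (2*k+1)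
    positivity
  · exact le_refl 0

private lemma Dnn {u : ℝ} (hu : 0 < u) (i : ℕ) : 0 ≤ (PITensors u).D i := by
  simp only [PITensors]
  split_ifs <;> positivity

private lemma sum_eraseIdx_add : ∀ (l : List ℕ) (i : ℕ), i < l.length →
    (l.eraseIdx i).sum + l[i]! = l.sum
  | a :: l, 0, _ => by simp [Nat.add_comm]
  | a :: l, i+1, h => by
      have hi : i < l.length := by simpa using h
      have := sum_eraseIdx_add l i hi
      simp only [List.eraseIdx_cons_succ, List.sum_cons, List.getElem!_cons_succ]
      omega

private lemma length_eraseIdx' (l : List ℕ) (i : ℕ) (h : i < l.length) :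
    (l.eraseIdx i).length = l.length - 1 := by
  rw [List.length_eraseIdx]; simp [h]

private lemma selectIdx_toFinset {l : List ℕ} (s : Finset (Fin l.length)) :
    ((List.finRange l.length).filter (fun i => decide (i ∈ s))).toFinset = s := by
  ext i
  simp [List.mem_filter]

private lemma selectIdx_length {l : List ℕ} (s : Finset (Fin l.length)) :
    (selectIdx l s).length = s.card := by
  rw [selectIdx, List.length_map]
  have hnd : ((List.finRange l.length).filter (fun i => decide (i ∈ s))).Nodup :=
    (List.nodup_finRange _).filter _
  rw [← List.toFinset_card_of_nodup hnd, selectIdx_toFinset]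

private lemma selectIdx_sum {l : List ℕ} (s : Finset (Fin l.length)) :
    (selectIdx l s).sum = ∑ i ∈ s, l.get i := by
  have hnd : ((List.finRange l.length).filter (fun i => decide (i ∈ s))).Nodup :=
    (List.nodup_finRange _).filter _
  rw [selectIdx, ← List.sum_toFinset _ hnd, selectIdx_toFinset]

private lemma selectIdx_sum_add {l : List ℕ} (s : Finset (Fin l.length)) :
    (selectIdx l s).sum + (selectIdx l sᶜ).sum = l.sum := by
  rw [selectIdx_sum, selectIdx_sum, Finset.sum_add_sum_compl]
  simp [List.get_eq_getElem]

private lemma selectIdx_card_add {l : List ℕ} (s : Finset (Fin l.length)) :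
    (selectIdx l s).length + (selectIdx l sᶜ).length = l.length := by
  rw [selectIdx_length, selectIdx_length, Finset.card_add_card_compl, Fintype.card_fin]

private def Ee (g : ℕ) (l : List ℕ) : ℤ := (l.sum : ℤ) + 5 - 5 * g - 2 * l.length

private lemma pi_main (FPI : ℝ → ℕ → List ℕ → ℝ)
    (hFPI : ∀ u : ℝ, 0 < u → IsAmplitudes id (PITensors u) (FPI u)) :
    ∀ N g (l : List ℕ), 2*g + l.length = N → 1 ≤ l.length → 2 < 2*g + l.length →
      ∀ u : ℝ, 0 < u →
      FPI u g l = u ^ (Ee g l) * FPI 1 g l ∧ 0 ≤ FPI u g l := by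
  intro N
  induction N using Nat.strong_induction_on with
  | _ N IH =>
  intro g l hN hlen hgt u hu
  have hu0 : u ≠ 0 := hu.ne'
  rcases Nat.lt_or_ge N 4 with hN4 | hN4
  · -- base case N = 3
    have hN3 : 2*g + l.length = 3 := by omega
    have hg2 : g < 2 := by omega
    interval_cases g
    · have h3 : l.length = 3 := by omega
      obtain ⟨a, b, c, rfl⟩ : ∃ a b c, l = [a,b,c] := by
        match l, h3 with
        | [a,b,c], _ => exact ⟨a,b,c,rfl⟩
      rw [(hFPI u hu).base_A, (hFPI 1 one_pos).base_A]
      have he : Ee 0 [a,b,c] = (a:ℤ)+b+c-1 := by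
        simp only [Ee, List.sum_cons, List.sum_nil, List.length_cons, List.length_nil]
        push_cast; ring
      rw [he]
      refine ⟨Ascale hu a b c, ?_⟩
      simp only [PITensors]
      split_ifs <;> positivity
    · have h1 : l.length = 1 := by omega
      obtain ⟨a, rfl⟩ := List.length_eq_one_iff.mp h1
      rw [(hFPI u hu).base_D, (hFPI 1 one_pos).base_D]
      have he : Ee 1 [a] = (a:ℤ)-2 := by
        simp only [Ee, List.sum_cons, List.sum_nil, List.length_cons, List.length_nil]
        push_cast; ring
      rw [he]
      exact ⟨Dscale hu a, Dnn hu a⟩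
  · -- recursive case
    cases l with
    | nil => simp at hlen
    | cons α t =>
    simp only [List.length_cons] at hN hgt
    have h4 : 4 ≤ 2*g + (t.length + 1) := by omega
    have hzero : ∀ (v:ℝ), 0 < v → ∀ (L : List ℕ) (μ : ℕ), L.length ≤ 1 →
        FPI v 0 (μ :: L) = 0 := by
      intro v hv L μ hL
      match L, hL with
      | [], _ => exact (hFPI v hv).zero_one μ
      | [x], _ => exact (hFPI v hv).zero_two μ x
    -- B-terms
    have hB : ∀ (m : Fin t.length) (μ : ℕ),
        ((PITensors u).B α (t.get m) μ * FPI u g (μ :: t.eraseIdx m.1)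
          = u ^ Ee g (α::t) * ((PITensors 1).B α (t.get m) μ * FPI 1 g (μ :: t.eraseIdx m.1)))
        ∧ 0 ≤ (PITensors u).B α (t.get m) μ * FPI u g (μ :: t.eraseIdx m.1) := by
      intro m μ
      have hlt : m.1 < t.length := m.isLt
      have hle : (t.eraseIdx m.1).length = t.length - 1 := length_eraseIdx' t m.1 hlt
      have hsum : (t.eraseIdx m.1).sum + t.get m = t.sum := by
        have h := sum_eraseIdx_add t m.1 hlt
        rwa [getElem!_pos t m.1 hlt, ← List.get_eq_getElem] at h
      obtain ⟨ih1, ih2⟩ := IH (N-1) (by omega) g (μ :: t.eraseIdx m.1)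
        (by simp only [List.length_cons]; omega) (by simp only [List.length_cons]; omega)
        (by simp only [List.length_cons]; omega) u hu
      refine ⟨?_, mul_nonneg (Bnn hu _ _ _) ih2⟩
      rw [Bscale hu, ih1, mul_mul_mul_comm, ← zpow_add₀ hu0]
      have he : ((α:ℤ) + (t.get m) - μ - 2) + Ee g (μ :: t.eraseIdx m.1) = Ee g (α::t) := by
        simp only [Ee, List.sum_cons, List.length_cons]
        omega
      rw [he]
    -- C inner bracket
    have hW : ∀ μ ν : ℕ,
        ((if g = 0 then 0 else FPI u (g-1) (μ :: ν :: t))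
           + ∑ g₁ ∈ Finset.range (g+1), ∑ s : Finset (Fin t.length),
               FPI u g₁ (μ :: selectIdx t s) * FPI u (g - g₁) (ν :: selectIdx t sᶜ)
          = u ^ (Ee g (α::t) - ((α:ℤ) - μ - ν - 3)) *
            ((if g = 0 then 0 else FPI 1 (g-1) (μ :: ν :: t))
             + ∑ g₁ ∈ Finset.range (g+1), ∑ s : Finset (Fin t.length),
                 FPI 1 g₁ (μ :: selectIdx t s) * FPI 1 (g - g₁) (ν :: selectIdx t sᶜ)))
        ∧ 0 ≤ (if g = 0 then 0 else FPI u (g-1) (μ :: ν :: t))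
           + ∑ g₁ ∈ Finset.range (g+1), ∑ s : Finset (Fin t.length),
               FPI u g₁ (μ :: selectIdx t s) * FPI u (g - g₁) (ν :: selectIdx t sᶜ) := by
      intro μ ν
      have hX : ((if g = 0 then 0 else FPI u (g-1) (μ :: ν :: t))
          = u ^ (Ee g (α::t) - ((α:ℤ) - μ - ν - 3)) *
            (if g = 0 then 0 else FPI 1 (g-1) (μ :: ν :: t)))
          ∧ 0 ≤ (if g = 0 then 0 else FPI u (g-1) (μ :: ν :: t)) := by
        by_cases hg : g = 0
        · simp [hg]
        · simp only [if_neg hg]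
          have hg1 : 1 ≤ g := Nat.one_le_iff_ne_zero.mpr hg
          obtain ⟨ih1, ih2⟩ := IH (N-1) (by omega) (g-1) (μ :: ν :: t)
            (by simp only [List.length_cons]; omega) (by simp only [List.length_cons]; omega)
            (by simp only [List.length_cons]; omega) u hu
          refine ⟨?_, ih2⟩
          rw [ih1]
          have he : Ee (g-1) (μ :: ν :: t) = Ee g (α::t) - ((α:ℤ) - μ - ν - 3) := by
            simp only [Ee, List.sum_cons, List.length_cons]
            omega
          rw [he]
      have hY : ∀ g₁ ∈ Finset.range (g+1), ∀ s : Finset (Fin t.length),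
          (FPI u g₁ (μ :: selectIdx t s) * FPI u (g-g₁) (ν :: selectIdx t sᶜ)
            = u ^ (Ee g (α::t) - ((α:ℤ) - μ - ν - 3)) *
              (FPI 1 g₁ (μ :: selectIdx t s) * FPI 1 (g-g₁) (ν :: selectIdx t sᶜ)))
          ∧ 0 ≤ FPI u g₁ (μ :: selectIdx t s) * FPI u (g-g₁) (ν :: selectIdx t sᶜ) := by
        intro g₁ hg₁ s
        rw [Finset.mem_range] at hg₁
        have hcard := selectIdx_card_add (l := t) s
        have hsum := selectIdx_sum_add (l := t) s
        by_cases h1 : g₁ = 0 ∧ (selectIdx t s).length ≤ 1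
        · obtain ⟨rfl, hl1⟩ := h1
          rw [hzero u hu _ _ hl1, hzero 1 one_pos _ _ hl1]
          simp
        by_cases h2 : g - g₁ = 0 ∧ (selectIdx t sᶜ).length ≤ 1
        · obtain ⟨hgg, hl1⟩ := h2
          rw [hgg, hzero u hu _ _ hl1, hzero 1 one_pos _ _ hl1]
          simp
        push_neg at h1 h2
        have h1' : 3 ≤ 2*g₁ + ((selectIdx t s).length + 1) := by
          rcases Nat.eq_zero_or_pos g₁ with rfl | h
          · have := h1 rfl; omega
          · omega
        have h2' : 3 ≤ 2*(g-g₁) + ((selectIdx t sᶜ).length + 1) := by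
          rcases Nat.eq_zero_or_pos (g - g₁) with hz | h
          · have := h2 hz; omega
          · omega
        obtain ⟨iha1, iha2⟩ := IH (2*g₁ + ((selectIdx t s).length + 1)) (by omega)
          g₁ (μ :: selectIdx t s) (by simp only [List.length_cons])
          (by simp only [List.length_cons]; omega) (by simp only [List.length_cons]; omega) u hu
        obtain ⟨ihb1, ihb2⟩ := IH (2*(g-g₁) + ((selectIdx t sᶜ).length + 1)) (by omega)
          (g-g₁) (ν :: selectIdx t sᶜ) (by simp only [List.length_cons])
          (by simp only [List.length_cons]; omega) (by simp only [List.length_cons]; omega) u hu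
        refine ⟨?_, mul_nonneg iha2 ihb2⟩
        rw [iha1, ihb1, mul_mul_mul_comm, ← zpow_add₀ hu0]
        have he : Ee g₁ (μ :: selectIdx t s) + Ee (g-g₁) (ν :: selectIdx t sᶜ)
            = Ee g (α::t) - ((α:ℤ) - μ - ν - 3) := by
          simp only [Ee, List.sum_cons, List.length_cons]
          omega
        rw [he]
      constructor
      · rw [mul_add, hX.1]
        congr 1
        rw [Finset.mul_sum]
        refine Finset.sum_congr rfl fun g₁ hg₁ => ?_
        rw [Finset.mul_sum]
        exact Finset.sum_congr rfl fun s _ => (hY g₁ hg₁ s).1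
      · exact add_nonneg hX.2 (Finset.sum_nonneg fun g₁ hg₁ =>
          Finset.sum_nonneg fun s _ => (hY g₁ hg₁ s).2)
    rw [(hFPI u hu).recur g α t h4, (hFPI 1 one_pos).recur g α t h4]
    constructor
    · have T1 : (∑ m : Fin t.length, ∑' μ, (PITensors u).B α (t.get m) μ * FPI u g (μ :: t.eraseIdx m.1))
          = u ^ Ee g (α::t) * ∑ m : Fin t.length, ∑' μ, (PITensors 1).B α (t.get m) μ * FPI 1 g (μ :: t.eraseIdx m.1) := by
        rw [Finset.mul_sum]
        refine Finset.sum_congr rfl fun m _ => ?_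
        rw [← tsum_mul_left]
        exact tsum_congr fun μ => (hB m μ).1
      have T2 : (∑' μ, ∑' ν, (PITensors u).C α μ ν *
            ((if g = 0 then 0 else FPI u (g-1) (μ :: ν :: t))
             + ∑ g₁ ∈ Finset.range (g+1), ∑ s : Finset (Fin t.length),
                 FPI u g₁ (μ :: selectIdx t s) * FPI u (g - g₁) (ν :: selectIdx t sᶜ)))
          = u ^ Ee g (α::t) * ∑' μ, ∑' ν, (PITensors 1).C α μ ν *
            ((if g = 0 then 0 else FPI 1 (g-1) (μ :: ν :: t))
             + ∑ g₁ ∈ Finset.range (g+1), ∑ s : Finset (Fin t.length),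
                 FPI 1 g₁ (μ :: selectIdx t s) * FPI 1 (g - g₁) (ν :: selectIdx t sᶜ)) := by
        rw [← tsum_mul_left]
        refine tsum_congr fun μ => ?_
        rw [← tsum_mul_left]
        refine tsum_congr fun ν => ?_
        rw [Cscale hu, (hW μ ν).1, mul_mul_mul_comm, ← zpow_add₀ hu0]
        have he : ((α:ℤ) - μ - ν - 3) + (Ee g (α::t) - ((α:ℤ) - μ - ν - 3)) = Ee g (α::t) := by
          ring
        rw [he]
      rw [T1, T2]
      ring
    · refine add_nonneg (Finset.sum_nonneg fun m _ => tsum_nonneg fun μ => (hB m μ).2)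
        (mul_nonneg (by norm_num) (tsum_nonneg fun μ => tsum_nonneg fun ν =>
          mul_nonneg (Cnn hu _ _ _) (hW μ ν).2))

/-- homogeneity in `u` and nonnegativity of the Painlevé I amplitudes. -/
theorem stmt_9 (FPI : ℝ → ℕ → List ℕ → ℝ)
    (hFPI : ∀ u : ℝ, 0 < u → IsAmplitudes id (PITensors u) (FPI u)) :
    ∀ u : ℝ, 0 < u → ∀ (g n : ℕ), 1 ≤ n → 2 < 2 * g + n → ∀ k : Fin n → ℕ,
      FPI u g (List.ofFn k)
          = u ^ (-(5 * (g : ℤ) - 5 + 2 * n - ∑ i : Fin n, (k i : ℤ))) *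
              FPI 1 g (List.ofFn k) ∧
        0 ≤ FPI u g (List.ofFn k) := by
  intro u hu g n hn h2 k
  have hlen : (List.ofFn k).length = n := List.length_ofFn
  obtain ⟨h1, h2'⟩ := pi_main FPI hFPI (2*g + n) g (List.ofFn k) (by rw [hlen])
    (by rw [hlen]; exact hn) (by rw [hlen]; exact h2) u hu
  refine ⟨?_, h2'⟩
  rw [h1]
  have he : Ee g (List.ofFn k) = -(5 * (g : ℤ) - 5 + 2 * n - ∑ i : Fin n, (k i : ℤ)) := by
    simp only [Ee, List.sum_ofFn, hlen]
    push_cast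
    ring
  rw [he]
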